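/- Let m > 0 and n > 0. There exist constants C > 0 and δ_0 > 0 (depending only on m and n) such that for every δ with 0 < δ ≤ δ_0 and every u > 0, 2 m^2 ∫_{(n/m) u + δ^{-1}}^{∞} v · e^{-m^2 v^2} · I_0(2 m n v u) · e^{-n^2 u^2} dv ≤ C e^{-m^2/(4 δ^2)}. -/

import Mathlib

open MeasureTheory Real

/-- Modified Bessel function of the first kind of order zero,
`I₀(y) = (1/π) ∫_0^π e^{y cos φ} dφ`. -/
noncomputable def besselI0 (y : ℝ) : ℝ :=
  (1 / Real.pi) * ∫ φ in (0:ℝ)..Real.pi, Real.exp (y * Real.cos φ)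

open Filter Set in
lemma tail_int (a c P Q : ℝ) (hc : 0 < c) (hP : 0 ≤ P) (hQ : 0 ≤ Q) :
    IntegrableOn (fun v => (P + Q * (v - a)) * Real.exp (-(c * v))) (Set.Ioi a) ∧
    ∫ v in Set.Ioi a, (P + Q * (v - a)) * Real.exp (-(c * v))
      = (P / c + Q / c ^ 2) * Real.exp (-(c * a)) := by
  set F : ℝ → ℝ := fun v => -((P + Q * (v - a)) / c + Q / c ^ 2) * Real.exp (-(c * v)) with hF
  have hderiv : ∀ v : ℝ, HasDerivAt F ((P + Q * (v - a)) * Real.exp (-(c * v))) v := by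
    intro v
    have h1 : HasDerivAt (fun v : ℝ => -((P + Q * (v - a)) / c + Q / c ^ 2)) (-(Q * 1 / c)) v := by
      exact (((((hasDerivAt_id v).sub_const a).const_mul Q).const_add P).div_const c).add_const
        (Q / c ^ 2) |>.neg
    have h2 : HasDerivAt (fun v : ℝ => Real.exp (-(c * v)))
        (Real.exp (-(c * v)) * -(c * 1)) v := (((hasDerivAt_id v).const_mul c).neg).exp
    have h3 : HasDerivAt F (-(Q * 1 / c) * Real.exp (-(c * v))
        + -((P + Q * (v - a)) / c + Q / c ^ 2) * (Real.exp (-(c * v)) * -(c * 1))) v := h1.mul h2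
    convert h3 using 1
    field_simp
    ring
  have hexp : Tendsto (fun v : ℝ => Real.exp (-(c * v))) atTop (nhds 0) := by
    have : Tendsto (fun v : ℝ => c * v) atTop atTop :=
      Tendsto.const_mul_atTop hc tendsto_id
    exact (tendsto_exp_neg_atTop_nhds_zero).comp this
  have hvexp : Tendsto (fun v : ℝ => v * Real.exp (-(c * v))) atTop (nhds 0) := by
    have h0 : Tendsto (fun x : ℝ => x ^ 1 * Real.exp (-x)) atTop (nhds 0) :=
      tendsto_pow_mul_exp_neg_atTop_nhds_zero 1
    have h1 : Tendsto (fun v : ℝ => c * v) atTop atTop :=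
      Tendsto.const_mul_atTop hc tendsto_id
    have h2 := (h0.comp h1).const_mul (1 / c)
    rw [mul_zero] at h2
    refine h2.congr fun v => ?_
    simp only [Function.comp, pow_one]
    field_simp
  have htends : Tendsto F atTop (nhds 0) := by
    have h := (hexp.const_mul (-((P - Q * a) / c + Q / c ^ 2))).add (hvexp.const_mul (-(Q / c)))
    rw [mul_zero, mul_zero, add_zero] at h
    refine h.congr fun v => ?_
    simp only [hF]
    ring
  have hnonneg : ∀ v ∈ Set.Ioi a, 0 ≤ (P + Q * (v - a)) * Real.exp (-(c * v)) := by
    intro v hv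
    have : (0:ℝ) ≤ P + Q * (v - a) := by nlinarith [Set.mem_Ioi.mp hv]
    exact mul_nonneg this (Real.exp_pos _).le
  have hint : IntegrableOn (fun v => (P + Q * (v - a)) * Real.exp (-(c * v))) (Set.Ioi a) :=
    integrableOn_Ioi_deriv_of_nonneg (hderiv a).continuousAt.continuousWithinAt
      (fun x _ => hderiv x) hnonneg htends
  refine ⟨hint, ?_⟩
  rw [integral_Ioi_of_hasDerivAt_of_tendsto (hderiv a).continuousAt.continuousWithinAt
    (fun x _ => hderiv x) hint htends]
  simp only [hF, sub_self, mul_zero, add_zero, zero_sub, neg_neg, neg_mul]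

open Filter Set in
lemma besselI0_nonneg (y : ℝ) : 0 ≤ besselI0 y := by
  unfold besselI0
  apply mul_nonneg (by positivity)
  exact intervalIntegral.integral_nonneg Real.pi_pos.le fun x _ => (Real.exp_pos _).le

open Filter Set in
lemma besselI0_le_exp {y : ℝ} (hy : 0 ≤ y) : besselI0 y ≤ Real.exp y := by
  unfold besselI0
  have hcont : Continuous fun φ : ℝ => Real.exp (y * Real.cos φ) := by continuity
  have h1 : ∫ φ in (0:ℝ)..Real.pi, Real.exp (y * Real.cos φ)
      ≤ ∫ _ in (0:ℝ)..Real.pi, Real.exp y := by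
    apply intervalIntegral.integral_mono_on Real.pi_pos.le (hcont.intervalIntegrable 0 Real.pi)
      intervalIntegrable_const
    intro φ _
    exact Real.exp_le_exp.2 (mul_le_of_le_one_right hy (Real.cos_le_one φ))
  have h2 : ∫ _ in (0:ℝ)..Real.pi, Real.exp y = Real.pi * Real.exp y := by
    simp
  calc (1 / Real.pi) * ∫ φ in (0:ℝ)..Real.pi, Real.exp (y * Real.cos φ)
      ≤ (1 / Real.pi) * (Real.pi * Real.exp y) := by
        rw [← h2]; exact mul_le_mul_of_nonneg_left h1 (by positivity)
    _ = Real.exp y := by field_simp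

open Filter Set in
lemma cos_le_one_sub (φ : ℝ) (h0 : 0 ≤ φ) (hπ : φ ≤ Real.pi) :
    Real.cos φ ≤ 1 - 2 * (φ / Real.pi) ^ 2 := by
  have h1 : 2 / Real.pi * (φ / 2) ≤ Real.sin (φ / 2) :=
    Real.mul_le_sin (by linarith) (by linarith)
  have h2 : Real.sin (φ / 2) ^ 2 = 1 / 2 - Real.cos (2 * (φ / 2)) / 2 :=
    Real.sin_sq_eq_half_sub _
  have h3 : 2 / Real.pi * (φ / 2) = φ / Real.pi := by ring
  have h4 : (φ / Real.pi) ^ 2 ≤ Real.sin (φ / 2) ^ 2 := by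
    rw [← h3]
    apply pow_le_pow_left₀ (by positivity) h1
  have h5 : (2:ℝ) * (φ / 2) = φ := by ring
  rw [h2, h5] at h4
  linarith

open Filter Set in
lemma besselI0_le_div_sqrt {y : ℝ} (hy : 0 < y) :
    besselI0 y ≤ Real.exp y / Real.sqrt y := by
  unfold besselI0
  have hb : 0 < 2 * y / Real.pi ^ 2 := by positivity
  set b := 2 * y / Real.pi ^ 2 with hbdef
  have hcont : Continuous fun φ : ℝ => Real.exp (y * Real.cos φ) := by continuity
  have hcont2 : Continuous fun φ : ℝ => Real.exp y * Real.exp (-b * φ ^ 2) := by continuity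
  have h1 : ∫ φ in (0:ℝ)..Real.pi, Real.exp (y * Real.cos φ)
      ≤ ∫ φ in (0:ℝ)..Real.pi, Real.exp y * Real.exp (-b * φ ^ 2) := by
    apply intervalIntegral.integral_mono_on Real.pi_pos.le (hcont.intervalIntegrable 0 Real.pi)
      (hcont2.intervalIntegrable 0 Real.pi)
    intro φ hφ
    rw [← Real.exp_add]
    apply Real.exp_le_exp.2
    have := cos_le_one_sub φ hφ.1 hφ.2
    have h6 : y * Real.cos φ ≤ y * (1 - 2 * (φ / Real.pi) ^ 2) :=
      mul_le_mul_of_nonneg_left this hy.le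
    have h7 : y * (1 - 2 * (φ / Real.pi) ^ 2) = y + -b * φ ^ 2 := by
      rw [hbdef]; field_simp; ring
    linarith
  have h2 : ∫ φ in (0:ℝ)..Real.pi, Real.exp y * Real.exp (-b * φ ^ 2)
      = Real.exp y * ∫ φ in (0:ℝ)..Real.pi, Real.exp (-b * φ ^ 2) := by
    rw [intervalIntegral.integral_const_mul]
  have h3 : ∫ φ in (0:ℝ)..Real.pi, Real.exp (-b * φ ^ 2)
      ≤ ∫ φ in Set.Ioi (0:ℝ), Real.exp (-b * φ ^ 2) := by
    rw [intervalIntegral.integral_of_le Real.pi_pos.le]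
    apply setIntegral_mono_set (integrable_exp_neg_mul_sq hb).integrableOn
      (Filter.Eventually.of_forall fun x => (Real.exp_pos _).le)
    exact Filter.Eventually.of_forall fun x hx => hx.1
  have h4 : ∫ φ in Set.Ioi (0:ℝ), Real.exp (-b * φ ^ 2) = Real.sqrt (Real.pi / b) / 2 :=
    integral_gaussian_Ioi b
  have h5 : Real.sqrt (Real.pi / b) / 2 ≤ Real.pi / Real.sqrt y := by
    have : Real.pi / b = Real.pi ^ 2 * (Real.pi / (2 * y)) := by
      rw [hbdef]; field_simp
    rw [this, Real.sqrt_mul (by positivity), Real.sqrt_sq Real.pi_pos.le]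
    rw [Real.sqrt_div Real.pi_pos.le]
    have hle : Real.sqrt Real.pi / Real.sqrt (2 * y) ≤ 2 / Real.sqrt y := by
      rw [div_le_div_iff₀ (by positivity) (by positivity)]
      have e1 : Real.sqrt Real.pi * Real.sqrt y = Real.sqrt (Real.pi * y) :=
        (Real.sqrt_mul Real.pi_pos.le y).symm
      have e2 : 2 * Real.sqrt (2 * y) = Real.sqrt (8 * y) := by
        have h8 : (8:ℝ) * y = 2 ^ 2 * (2 * y) := by ring
        have h9 : Real.sqrt ((2:ℝ) ^ 2) = 2 := Real.sqrt_sq (by norm_num)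
        rw [h8, Real.sqrt_mul (by positivity : (0:ℝ) ≤ 2 ^ 2), h9]
      rw [e1, e2]
      apply Real.sqrt_le_sqrt
      nlinarith [Real.pi_le_four, hy.le]
    calc Real.pi * (Real.sqrt Real.pi / Real.sqrt (2 * y)) / 2
        ≤ Real.pi * (2 / Real.sqrt y) / 2 := by
          apply div_le_div_of_nonneg_right _ (by norm_num)
          exact mul_le_mul_of_nonneg_left hle Real.pi_pos.le
      _ = Real.pi / Real.sqrt y := by ring
  have hA : ∫ φ in (0:ℝ)..Real.pi, Real.exp (y * Real.cos φ)
      ≤ Real.exp y * (Real.pi / Real.sqrt y) := by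
    rw [h2] at h1
    refine h1.trans ?_
    refine (mul_le_mul_of_nonneg_left (h3.trans_eq h4) (Real.exp_pos _).le).trans ?_
    exact mul_le_mul_of_nonneg_left h5 (Real.exp_pos _).le
  calc (1 / Real.pi) * ∫ φ in (0:ℝ)..Real.pi, Real.exp (y * Real.cos φ)
      ≤ (1 / Real.pi) * (Real.exp y * (Real.pi / Real.sqrt y)) :=
        mul_le_mul_of_nonneg_left hA (by positivity)
    _ = Real.exp y / Real.sqrt y := by field_simp

lemma sqrt_add_le' (x y : ℝ) (hx : 0 ≤ x) (hy : 0 ≤ y) :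
    Real.sqrt (x + y) ≤ Real.sqrt x + Real.sqrt y := by
  have h2 : x + y ≤ (Real.sqrt x + Real.sqrt y) ^ 2 := by
    nlinarith [Real.sq_sqrt hx, Real.sq_sqrt hy, Real.sqrt_nonneg x, Real.sqrt_nonneg y]
  calc Real.sqrt (x + y) ≤ Real.sqrt ((Real.sqrt x + Real.sqrt y) ^ 2) := Real.sqrt_le_sqrt h2
    _ = Real.sqrt x + Real.sqrt y := Real.sqrt_sq (by positivity)

lemma sqrt_le_one_add (w : ℝ) (hw : 0 ≤ w) : Real.sqrt w ≤ 1 + w := by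
  calc Real.sqrt w ≤ Real.sqrt ((1 + w) ^ 2) := Real.sqrt_le_sqrt (by nlinarith)
    _ = 1 + w := Real.sqrt_sq (by linarith)

set_option maxHeartbeats 1000000 in
/-- For `m, n > 0` there exist `C > 0` and `δ₀ > 0` such that for all `0 < δ ≤ δ₀`
and all `u > 0`,
`2m² ∫_{(n/m)u + δ⁻¹}^∞ v e^{-m²v²} I₀(2mnvu) e^{-n²u²} dv ≤ C e^{-m²/(4δ²)}`. -/
theorem bessel_gaussian_tail_smallness (m n : ℝ) (hm : 0 < m) (hn : 0 < n) :
    ∃ C > (0:ℝ), ∃ δ₀ > (0:ℝ), ∀ δ : ℝ, 0 < δ → δ ≤ δ₀ → ∀ u : ℝ, 0 < u →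
      2 * m ^ 2 * ∫ v in Set.Ioi ((n / m) * u + δ⁻¹),
          v * Real.exp (-m ^ 2 * v ^ 2) * besselI0 (2 * m * n * v * u)
            * Real.exp (-n ^ 2 * u ^ 2)
        ≤ C * Real.exp (-m ^ 2 / (4 * δ ^ 2)) := by
  have hC₁ : (0:ℝ) < 2 * n / m + 2 + 2 / m ^ 2 := by positivity
  have hC₂ : (0:ℝ) < 2 / m + (4 + 2 / m ^ 2) / Real.sqrt (2 * m * n) := by positivity
  set C₁ : ℝ := 2 * n / m + 2 + 2 / m ^ 2 with hC₁def
  set C₂ : ℝ := 2 / m + (4 + 2 / m ^ 2) / Real.sqrt (2 * m * n) with hC₂def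
  clear_value C₁ C₂
  refine ⟨C₁ + C₂, by linarith, 1, one_pos, ?_⟩
  intro δ hδ hδ1 u hu
  set a : ℝ := (n / m) * u + δ⁻¹ with ha
  have ha0 : 0 < a := by positivity
  set c : ℝ := m ^ 2 / δ with hc
  have hc0 : 0 < c := by positivity
  clear_value a c
  have hexpid : m * n * u / δ + -(c * a) = -(m ^ 2 / δ ^ 2) := by
    rw [hc, ha]; field_simp; ring
  have hexpfin : Real.exp (-(m ^ 2 / δ ^ 2)) ≤ Real.exp (-m ^ 2 / (4 * δ ^ 2)) := by
    apply Real.exp_le_exp.2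
    rw [neg_div]
    apply neg_le_neg
    apply div_le_div_of_nonneg_left (by positivity) (by positivity)
    nlinarith [sq_nonneg δ]
  -- the generic reduction
  have key : ∀ P Q : ℝ, 0 ≤ P → 0 ≤ Q →
      (∀ v ∈ Set.Ioi a, v * Real.exp (-m ^ 2 * v ^ 2) * besselI0 (2 * m * n * v * u)
          * Real.exp (-n ^ 2 * u ^ 2)
        ≤ Real.exp (m * n * u / δ) * ((P + Q * (v - a)) * Real.exp (-(c * v)))) →
      2 * m ^ 2 * (∫ v in Set.Ioi a, v * Real.exp (-m ^ 2 * v ^ 2)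
          * besselI0 (2 * m * n * v * u) * Real.exp (-n ^ 2 * u ^ 2))
        ≤ 2 * m ^ 2 * ((P / c + Q / c ^ 2) * Real.exp (-(m ^ 2 / δ ^ 2))) := by
    intro P Q hP hQ hbd
    obtain ⟨hint, hval⟩ := tail_int a c P Q hc0 hP hQ
    have hmono : (∫ v in Set.Ioi a, v * Real.exp (-m ^ 2 * v ^ 2)
          * besselI0 (2 * m * n * v * u) * Real.exp (-n ^ 2 * u ^ 2))
        ≤ ∫ v in Set.Ioi a,
            Real.exp (m * n * u / δ) * ((P + Q * (v - a)) * Real.exp (-(c * v))) := by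
      apply integral_mono_of_nonneg
      · filter_upwards [ae_restrict_mem measurableSet_Ioi] with v hv
        have hv0 : 0 < v := lt_trans ha0 hv
        have hB := besselI0_nonneg (2 * m * n * v * u)
        positivity
      · exact (hint.const_mul _)
      · filter_upwards [ae_restrict_mem measurableSet_Ioi] with v hv
        exact hbd v hv
    have heq : (∫ v in Set.Ioi a,
          Real.exp (m * n * u / δ) * ((P + Q * (v - a)) * Real.exp (-(c * v))))
        = (P / c + Q / c ^ 2) * Real.exp (-(m ^ 2 / δ ^ 2)) := by
      rw [MeasureTheory.integral_const_mul, hval, ← mul_assoc, mul_comm (Real.exp (m * n * u / δ)),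
        mul_assoc, ← Real.exp_add, hexpid]
    rw [heq] at hmono
    exact mul_le_mul_of_nonneg_left hmono (by positivity)
  -- pointwise estimate
  have hpoint : ∀ v K : ℝ, v ∈ Set.Ioi a → 0 ≤ K →
      besselI0 (2 * m * n * v * u) ≤ K * Real.exp (2 * m * n * v * u) →
      v * Real.exp (-m ^ 2 * v ^ 2) * besselI0 (2 * m * n * v * u)
          * Real.exp (-n ^ 2 * u ^ 2)
        ≤ Real.exp (m * n * u / δ) * ((v * K) * Real.exp (-(c * v))) := by
    intro v K hv hK hbd
    have hv0 : 0 < v := lt_trans ha0 hv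
    have hva : a < v := hv
    have step1 : v * Real.exp (-m ^ 2 * v ^ 2) * besselI0 (2 * m * n * v * u)
          * Real.exp (-n ^ 2 * u ^ 2)
        ≤ (v * K) * Real.exp (-m ^ 2 * v ^ 2 + 2 * m * n * v * u + -n ^ 2 * u ^ 2) := by
      rw [Real.exp_add, Real.exp_add]
      calc v * Real.exp (-m ^ 2 * v ^ 2) * besselI0 (2 * m * n * v * u)
            * Real.exp (-n ^ 2 * u ^ 2)
          ≤ v * Real.exp (-m ^ 2 * v ^ 2) * (K * Real.exp (2 * m * n * v * u))
            * Real.exp (-n ^ 2 * u ^ 2) := by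
            apply mul_le_mul_of_nonneg_right _ (Real.exp_pos _).le
            exact mul_le_mul_of_nonneg_left hbd (by positivity)
        _ = (v * K) * (Real.exp (-m ^ 2 * v ^ 2) * Real.exp (2 * m * n * v * u)
            * Real.exp (-n ^ 2 * u ^ 2)) := by ring
    have step2 : -m ^ 2 * v ^ 2 + 2 * m * n * v * u + -n ^ 2 * u ^ 2
        ≤ m * n * u / δ + -(c * v) := by
      have ht : m / δ ≤ m * v - n * u := by
        have h0 : (n / m) * u + δ⁻¹ < v := by rw [ha] at hva; exact hva
        have h' : m * ((n / m) * u + δ⁻¹) ≤ m * v :=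
          mul_le_mul_of_nonneg_left h0.le hm.le
        have h'' : m * ((n / m) * u + δ⁻¹) = n * u + m / δ := by
          field_simp
        rw [h''] at h'
        linarith
      have hmδ : 0 < m / δ := by positivity
      have hsq : (m / δ) * (m * v - n * u) ≤ (m * v - n * u) ^ 2 := by nlinarith
      have hrhs : m * n * u / δ + -(c * v) = -((m / δ) * (m * v - n * u)) := by
        rw [hc]; field_simp; ring
      have hlhs : -m ^ 2 * v ^ 2 + 2 * m * n * v * u + -n ^ 2 * u ^ 2
          = -((m * v - n * u) ^ 2) := by ring
      rw [hrhs, hlhs]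
      linarith
    calc v * Real.exp (-m ^ 2 * v ^ 2) * besselI0 (2 * m * n * v * u)
          * Real.exp (-n ^ 2 * u ^ 2)
        ≤ (v * K) * Real.exp (-m ^ 2 * v ^ 2 + 2 * m * n * v * u + -n ^ 2 * u ^ 2) :=
          step1
      _ ≤ (v * K) * Real.exp (m * n * u / δ + -(c * v)) := by
          apply mul_le_mul_of_nonneg_left (Real.exp_le_exp.2 step2) (by positivity)
      _ = Real.exp (m * n * u / δ) * ((v * K) * Real.exp (-(c * v))) := by
          rw [Real.exp_add]; ring
  rcases le_total u 1 with hu1 | hu1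
  · -- case u ≤ 1
    have hbd : ∀ v ∈ Set.Ioi a, v * Real.exp (-m ^ 2 * v ^ 2)
          * besselI0 (2 * m * n * v * u) * Real.exp (-n ^ 2 * u ^ 2)
        ≤ Real.exp (m * n * u / δ) * ((a + 1 * (v - a)) * Real.exp (-(c * v))) := by
      intro v hv
      have hv0 : 0 < v := lt_trans ha0 hv
      have h := hpoint v 1 hv zero_le_one
        (by simpa using besselI0_le_exp (by positivity : (0:ℝ) ≤ 2 * m * n * v * u))
      calc v * Real.exp (-m ^ 2 * v ^ 2) * besselI0 (2 * m * n * v * u)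
            * Real.exp (-n ^ 2 * u ^ 2)
          ≤ Real.exp (m * n * u / δ) * ((v * 1) * Real.exp (-(c * v))) := h
        _ = Real.exp (m * n * u / δ) * ((a + 1 * (v - a)) * Real.exp (-(c * v))) := by
            ring
    have h2 := key a 1 ha0.le zero_le_one hbd
    have hA : 2 * m ^ 2 * (a / c + 1 / c ^ 2) ≤ C₁ := by
      have hid : 2 * m ^ 2 * (a / c + 1 / c ^ 2)
          = 2 * (n / m) * (u * δ) + 2 + 2 * δ ^ 2 / m ^ 2 := by
        rw [hc, ha]; field_simp
      rw [hid, hC₁def]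
      have e1 : 2 * (n / m) * (u * δ) ≤ 2 * (n / m) := by
        have huδ : u * δ ≤ 1 := mul_le_one₀ hu1 hδ.le hδ1
        exact mul_le_of_le_one_right (by positivity) huδ
      have e2 : 2 * δ ^ 2 / m ^ 2 ≤ 2 / m ^ 2 := by
        apply div_le_div_of_nonneg_right _ (by positivity)
        linarith [(pow_le_one₀ hδ.le hδ1 : δ ^ 2 ≤ 1)]
      have e3 : 2 * (n / m) = 2 * n / m := by ring
      linarith [e3 ▸ e1]
    calc 2 * m ^ 2 * (∫ v in Set.Ioi a, v * Real.exp (-m ^ 2 * v ^ 2)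
            * besselI0 (2 * m * n * v * u) * Real.exp (-n ^ 2 * u ^ 2))
        ≤ 2 * m ^ 2 * ((a / c + 1 / c ^ 2) * Real.exp (-(m ^ 2 / δ ^ 2))) := h2
      _ = (2 * m ^ 2 * (a / c + 1 / c ^ 2)) * Real.exp (-(m ^ 2 / δ ^ 2)) := by ring
      _ ≤ (C₁ + C₂) * Real.exp (-m ^ 2 / (4 * δ ^ 2)) := by
          apply mul_le_mul (by linarith) hexpfin (Real.exp_pos _).le (by linarith)
  · -- case 1 ≤ u
    set s : ℝ := Real.sqrt (2 * m * n * u) with hs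
    have h2mnu : (0:ℝ) < 2 * m * n * u := by positivity
    have hs0 : 0 < s := Real.sqrt_pos.2 h2mnu
    have hsl : Real.sqrt (2 * m * n) ≤ s := Real.sqrt_le_sqrt (by nlinarith [mul_pos (mul_pos (by linarith : (0:ℝ) < 2*m) hn) hu])
    have hsl0 : (0:ℝ) < Real.sqrt (2 * m * n) := Real.sqrt_pos.2 (by positivity)
    clear_value s
    set X : ℝ := Real.sqrt ((n / m) * u) with hX
    set Y : ℝ := Real.sqrt δ⁻¹ with hY
    have hX0 : 0 ≤ X := Real.sqrt_nonneg _
    have hY0 : 0 ≤ Y := Real.sqrt_nonneg _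
    clear_value X Y
    set P : ℝ := (X + Y + 1) / s with hP
    set Q : ℝ := s⁻¹ with hQ
    clear_value P Q
    have hP0 : 0 ≤ P := by
      rw [hP]; exact div_nonneg (by linarith) hs0.le
    have hQ0 : 0 ≤ Q := by rw [hQ]; exact inv_nonneg.2 hs0.le
    have hbd : ∀ v ∈ Set.Ioi a, v * Real.exp (-m ^ 2 * v ^ 2)
          * besselI0 (2 * m * n * v * u) * Real.exp (-n ^ 2 * u ^ 2)
        ≤ Real.exp (m * n * u / δ) * ((P + Q * (v - a)) * Real.exp (-(c * v))) := by
      intro v hv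
      have hv0 : 0 < v := lt_trans ha0 hv
      have hy : (0:ℝ) < 2 * m * n * v * u := by positivity
      set K : ℝ := (Real.sqrt (2 * m * n * v * u))⁻¹ with hK
      have hK0 : 0 ≤ K := by positivity
      have hbK : besselI0 (2 * m * n * v * u) ≤ K * Real.exp (2 * m * n * v * u) := by
        rw [hK, ← div_eq_inv_mul]
        exact besselI0_le_div_sqrt hy
      have h := hpoint v K hv hK0 hbK
      refine h.trans ?_
      apply mul_le_mul_of_nonneg_left _ (Real.exp_pos _).le
      apply mul_le_mul_of_nonneg_right _ (Real.exp_pos _).le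
      -- v * K ≤ P + Q * (v - a)
      have hvK : v * K = Real.sqrt v / s := by
        rw [hK, show 2 * m * n * v * u = (2 * m * n * u) * v by ring,
          Real.sqrt_mul h2mnu.le v, ← hs, mul_inv]
        have hvv := Real.sq_sqrt hv0.le
        field_simp
        nlinarith [hvv]
      rw [hvK]
      have hsv : Real.sqrt v ≤ X + Y + 1 + (v - a) := by
        have h1 : Real.sqrt v = Real.sqrt (a + (v - a)) := by ring_nf
        have h2 : Real.sqrt (a + (v - a)) ≤ Real.sqrt a + Real.sqrt (v - a) :=
          sqrt_add_le' a (v - a) ha0.le (by linarith [Set.mem_Ioi.mp hv])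
        have h3 : Real.sqrt a ≤ X + Y := by
          rw [ha, hX, hY]
          exact sqrt_add_le' _ _ (by positivity) (by positivity)
        have h4 : Real.sqrt (v - a) ≤ 1 + (v - a) :=
          sqrt_le_one_add _ (by linarith [Set.mem_Ioi.mp hv])
        rw [h1]
        linarith
      have : P + Q * (v - a) = (X + Y + 1 + (v - a)) / s := by
        rw [hP, hQ]; field_simp [hs0.ne']
      rw [this]
      exact div_le_div_of_nonneg_right hsv hs0.le
    have h2 := key P Q hP0 hQ0 hbd
    have hA : 2 * m ^ 2 * (P / c + Q / c ^ 2) ≤ C₂ := by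
      have hid : 2 * m ^ 2 * (P / c + Q / c ^ 2)
          = 2 * δ * X / s + (2 * (δ * Y) + 2 * δ + 2 * δ ^ 2 / m ^ 2) / s := by
        rw [hP, hQ, hc]; field_simp [hs0.ne']; ring
      rw [hid, hC₂def]
      have t1 : 2 * δ * X / s ≤ 2 / m := by
        have hXs : X / s = Real.sqrt (((n / m) * u) / (2 * m * n * u)) := by
          rw [hX, hs, Real.sqrt_div (by positivity) _]
        have hfrac : ((n / m) * u) / (2 * m * n * u) = (2 * m ^ 2)⁻¹ := by
          field_simp
        have hXs2 : X / s ≤ 1 / m := by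
          rw [hXs, hfrac]
          calc Real.sqrt (2 * m ^ 2)⁻¹ ≤ Real.sqrt (m ^ 2)⁻¹ := by
                apply Real.sqrt_le_sqrt
                apply inv_anti₀ (by positivity) (by nlinarith)
            _ = 1 / m := by rw [Real.sqrt_inv, Real.sqrt_sq hm.le, one_div]
        calc 2 * δ * X / s ≤ 2 * X / s := by
              apply div_le_div_of_nonneg_right _ hs0.le
              nlinarith [mul_nonneg hδ.le hX0]
          _ = 2 * (X / s) := by ring
          _ ≤ 2 * (1 / m) := by linarith
          _ = 2 / m := by ring
      have t2 : (2 * (δ * Y) + 2 * δ + 2 * δ ^ 2 / m ^ 2) / s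
          ≤ (4 + 2 / m ^ 2) / Real.sqrt (2 * m * n) := by
        have hδY : δ * Y = Real.sqrt δ := by
          rw [hY, Real.sqrt_inv, ← div_eq_mul_inv, Real.div_sqrt]
        have hδY1 : δ * Y ≤ 1 := hδY ▸ Real.sqrt_le_one.mpr hδ1
        have hnum : 2 * (δ * Y) + 2 * δ + 2 * δ ^ 2 / m ^ 2 ≤ 4 + 2 / m ^ 2 := by
          have : 2 * δ ^ 2 / m ^ 2 ≤ 2 / m ^ 2 := by
            apply div_le_div_of_nonneg_right _ (by positivity)
            linarith [(pow_le_one₀ hδ.le hδ1 : δ ^ 2 ≤ 1)]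
          linarith
        have hnum0 : 0 ≤ 2 * (δ * Y) + 2 * δ + 2 * δ ^ 2 / m ^ 2 := by
          have hh1 : 0 ≤ δ * Y := mul_nonneg hδ.le hY0
          have hh2 : 0 ≤ 2 * δ ^ 2 / m ^ 2 := by positivity
          linarith
        calc (2 * (δ * Y) + 2 * δ + 2 * δ ^ 2 / m ^ 2) / s
            ≤ (2 * (δ * Y) + 2 * δ + 2 * δ ^ 2 / m ^ 2) / Real.sqrt (2 * m * n) :=
              div_le_div_of_nonneg_left hnum0 hsl0 hsl
          _ ≤ (4 + 2 / m ^ 2) / Real.sqrt (2 * m * n) :=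
              div_le_div_of_nonneg_right hnum hsl0.le
      linarith
    calc 2 * m ^ 2 * (∫ v in Set.Ioi a, v * Real.exp (-m ^ 2 * v ^ 2)
            * besselI0 (2 * m * n * v * u) * Real.exp (-n ^ 2 * u ^ 2))
        ≤ 2 * m ^ 2 * ((P / c + Q / c ^ 2) * Real.exp (-(m ^ 2 / δ ^ 2))) := h2
      _ = (2 * m ^ 2 * (P / c + Q / c ^ 2)) * Real.exp (-(m ^ 2 / δ ^ 2)) := by ring
      _ ≤ (C₁ + C₂) * Real.exp (-m ^ 2 / (4 * δ ^ 2)) := by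
          apply mul_le_mul (by linarith) hexpfin (Real.exp_pos _).le (by linarith)
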